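/- Let m, n be real with m > n > 0 and let (C_l, H_l), (C_r, H_r) be region-2 states (0 < H_l < C_l < 1 and 0 < H_r < C_r < 1) with porosities φ_l = 1 - C_l + H_l, φ_r = 1 - C_r + H_r, fluxes f_l = H_l^n * φ_l^(m-n), f_r = H_r^n * φ_r^(m-n), and saturated conductivities K₁ = φ_l^m, K₂ = φ_r^m. Let R be a real number with R*K₂ ≠ K₁, and define the saturated-region flux q_s = (R - 1)/(R/K₁ - 1/K₂), the upper (backfilling) shock speed Λ_U = (f_l - q_s)/(C_l - 1), and the lower (wetting) shock speed Λ_L = (q_s - f_r)/(1 - C_r). Then Λ_U = R * Λ_L if and only if a*R² + b*R + c = 0, where a = ((1-C_l)/(1-C_r)) * (1 - (φ_r/φ_l)^m * (H_r/φ_r)^n), b = -((1-C_l)/(1-C_r)) * (1 - (H_r/φ_r)^n) + (H_l/φ_l)^n - 1, and c = 1 - (φ_l/φ_r)^m * (H_l/φ_l)^n. -/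
import Mathlib

set_option maxHeartbeats 1000000 in
private lemma saturated_ratio_quadratic_aux (P Q pl pr xl xr Cl Cr R : ℝ)
    (hP : P ≠ 0) (hQ : Q ≠ 0) (hpl : pl ≠ 0) (hpr : pr ≠ 0)
    (hCl : Cl - 1 ≠ 0) (hCr : 1 - Cr ≠ 0) (hRK : R*Q - P ≠ 0) :
    (xl * (P/pl) - (R-1)/(R/P - 1/Q))/(Cl-1) = R * (((R-1)/(R/P - 1/Q) - xr*(Q/pr))/(1-Cr)) ↔
    ((1-Cl)/(1-Cr)) * (1 - (Q/P)*(xr/pr)) * R^2 +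
      (-((1-Cl)/(1-Cr))*(1-(xr/pr)) + xl/pl - 1)*R + (1 - (P/Q)*(xl/pl)) = 0 := by
  have hD1 : (Cl-1)*((1-Cr)*((R*Q-P)*(pl*pr))) ≠ 0 :=
    mul_ne_zero hCl (mul_ne_zero hCr (mul_ne_zero hRK (mul_ne_zero hpl hpr)))
  have hD2 : (1-Cr)*(P*(Q*(pl*pr))) ≠ 0 :=
    mul_ne_zero hCr (mul_ne_zero hP (mul_ne_zero hQ (mul_ne_zero hpl hpr)))
  have hd : R/P - 1/Q = (R*Q - P)/(P*Q) := by field_simp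
  have e1 : (xl * (P/pl) - (R-1)/(R/P - 1/Q))/(Cl-1) - R * (((R-1)/(R/P - 1/Q) - xr*(Q/pr))/(1-Cr))
      = ((1-Cl)*(P*Q*pr - Q^2*xr)*pl*R^2
    + (-(1-Cl)*P*Q*pl*(pr-xr) + (1-Cr)*P*Q*(xl*pr - pl*pr))*R
    + (1-Cr)*(P*Q*pl - P^2*xl)*pr) / ((Cl-1)*((1-Cr)*((R*Q-P)*(pl*pr)))) := by
    rw [hd, eq_div_iff hD1]; field_simp; ring
  have e2 : ((1-Cl)/(1-Cr)) * (1 - (Q/P)*(xr/pr)) * R^2 + (-((1-Cl)/(1-Cr))*(1-(xr/pr)) + xl/pl - 1)*R + (1 - (P/Q)*(xl/pl))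
      = ((1-Cl)*(P*Q*pr - Q^2*xr)*pl*R^2
    + (-(1-Cl)*P*Q*pl*(pr-xr) + (1-Cr)*P*Q*(xl*pr - pl*pr))*R
    + (1-Cr)*(P*Q*pl - P^2*xl)*pr) / ((1-Cr)*(P*(Q*(pl*pr)))) := by
    rw [eq_div_iff hD2]; field_simp; ring
  rw [← sub_eq_zero, e1, e2, div_eq_zero_iff, div_eq_zero_iff]
  simp [hD1, hD2]

/-- Case VI (perched water table between two region-2 states): under the ansatz of a
constant shock-position ratio `R`, with saturated-region flux
`q_s = (R-1)/(R/K₁ - 1/K₂)`, backfilling shock speed `Λ_U = (f_l - q_s)/(C_l - 1)` and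
wetting shock speed `Λ_L = (q_s - f_r)/(1 - C_r)`, one has `Λ_U = R * Λ_L` iff
`a*R² + b*R + c = 0` with the coefficients of Equation (67). -/
theorem saturated_ratio_quadratic (m n Cl Hl Cr Hr R : ℝ)
    (hmn : n < m) (hn : 0 < n)
    (hHl : 0 < Hl) (hHlCl : Hl < Cl) (hCl : Cl < 1)
    (hHr : 0 < Hr) (hHrCr : Hr < Cr) (hCr : Cr < 1)
    (hRK : R * (1 - Cr + Hr) ^ m ≠ (1 - Cl + Hl) ^ m) :
    (Hl ^ n * (1 - Cl + Hl) ^ (m - n) -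
        (R - 1) / (R / (1 - Cl + Hl) ^ m - 1 / (1 - Cr + Hr) ^ m)) / (Cl - 1) =
      R * (((R - 1) / (R / (1 - Cl + Hl) ^ m - 1 / (1 - Cr + Hr) ^ m) -
        Hr ^ n * (1 - Cr + Hr) ^ (m - n)) / (1 - Cr)) ↔
    ((1 - Cl) / (1 - Cr)) *
        (1 - ((1 - Cr + Hr) / (1 - Cl + Hl)) ^ m * (Hr / (1 - Cr + Hr)) ^ n) * R ^ 2 +
      (-((1 - Cl) / (1 - Cr)) * (1 - (Hr / (1 - Cr + Hr)) ^ n) +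
        (Hl / (1 - Cl + Hl)) ^ n - 1) * R +
      (1 - ((1 - Cl + Hl) / (1 - Cr + Hr)) ^ m * (Hl / (1 - Cl + Hl)) ^ n) = 0 := by
  have hφl : (0:ℝ) < 1 - Cl + Hl := by linarith
  have hφr : (0:ℝ) < 1 - Cr + Hr := by linarith
  rw [Real.rpow_sub hφl, Real.rpow_sub hφr,
    Real.div_rpow hφr.le hφl.le, Real.div_rpow hφl.le hφr.le,
    Real.div_rpow hHr.le hφr.le, Real.div_rpow hHl.le hφl.le]
  have h1 : Hl ^ n * ((1 - Cl + Hl) ^ m / (1 - Cl + Hl) ^ n)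
      = Hl ^ n * ((1 - Cl + Hl) ^ m) / (1 - Cl + Hl) ^ n := by ring
  have h2 : Hr ^ n * ((1 - Cr + Hr) ^ m / (1 - Cr + Hr) ^ n)
      = Hr ^ n * ((1 - Cr + Hr) ^ m) / (1 - Cr + Hr) ^ n := by ring
  have := saturated_ratio_quadratic_aux ((1 - Cl + Hl) ^ m) ((1 - Cr + Hr) ^ m)
    ((1 - Cl + Hl) ^ n) ((1 - Cr + Hr) ^ n) (Hl ^ n) (Hr ^ n) Cl Cr R
    (Real.rpow_pos_of_pos hφl m).ne' (Real.rpow_pos_of_pos hφr m).ne'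
    (Real.rpow_pos_of_pos hφl n).ne' (Real.rpow_pos_of_pos hφr n).ne'
    (by nlinarith) (by linarith) (sub_ne_zero.mpr hRK)
  convert this using 3 <;> ring
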